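/- Let V be a non-negative bounded dg g-module and let {α_k : V^k ⊗ ∧^k g → g} (0 ≤ k ≤ u, where u = min(top(V), dim g)) be a family of linear maps. The corresponding Ω_g-linear degree-0 map α : Ω_g(V) → Ω_g(g) defines a dg Loday–Pirashvili module (V, α) if and only if for all 0 ≤ k ≤ u, all x_1,…,x_{k+1} ∈ g and v ∈ V^k: α_{k+1}(d^V_k v | x_1,…,x_{k+1}) = Σ_{i=1}^{k+1} (−1)^{i+1} ( [x_i, α_k(v | x_1,…,x̂_i,…,x_{k+1})]_g − α_k(x_i ▷ v | x_1,…,x̂_i,…,x_{k+1}) ) + Σ_{i<j} (−1)^{i+j} α_k(v | [x_i,x_j]_g, x_1,…,x̂_i,…,x̂_j,…,x_{k+1}). -/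

import Mathlib

/-!
STATEMENT 3.  (Proposition `Prop:otherdescriptionsofLP`.)  A family of maps
`α_k : V^k ⊗ ∧^k g → g` makes `(V, α)` a dg Loday–Pirashvili module (i.e. the
corresponding degree-0 `Ω_g`-linear map `α : Ω_g(V) → Ω_g(g)` intertwines the
total differentials) if and only if the explicit Chevalley–Eilenberg-type
equations of the paper hold.

Encoding: the target `g` (concentrated in degree 0, adjoint action) is
represented by an arbitrary dg `g`-module family `Wg` concentrated in degree 0
together with an equivariant identification `e0 : Wg 0 ≃ g`; the `Ω_g`-linear
map `α` corresponding to the family `A = {α_k}` is represented by its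
componentwise data `F` (a weak-morphism datum `V ⇝ Wg`) compatible with `A`
(`hcompat`); "(V, α) is a dg Loday–Pirashvili module" is `IsWeakMor F`
(the componentwise form of `α ∘ d^V_tot = d^{Wg}_tot ∘ α`).
-/

open scoped BigOperators

section Prelude

variable (K g : Type) [Field K] [CharZero K] [LieRing g] [LieAlgebra K g]

abbrev CEc (p : ℕ) (M : Type) [AddCommGroup M] [Module K M] : Type :=
  g [⋀^Fin p]→ₗ[K] M

/-- `D` is the Chevalley–Eilenberg differential with coefficients in `M`. -/
def IsCEDiff {M : Type} [AddCommGroup M] [Module K M] [LieRingModule g M]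
    (D : ∀ p : ℕ, CEc K g p M →ₗ[K] CEc K g (p+1) M) : Prop :=
  ∀ (p : ℕ) (ω : CEc K g p M) (xs : Fin (p+1) → g),
    D p ω xs = ∑ i : Fin (p+1), ((-1 : ℤ)^(i : ℕ)) •
      (⁅xs i, ω (xs ∘ i.succAbove)⁆
        - ∑ j : Fin p, if (i : ℕ) ≤ (j : ℕ) then
            ω (Function.update (xs ∘ i.succAbove) j ⁅xs i, xs (i.succAbove j)⁆)
          else 0)

variable {K g}
variable (V W : ℤ → Type)
  [∀ i, AddCommGroup (V i)] [∀ i, Module K (V i)]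
  [∀ i, LieRingModule g (V i)] [∀ i, LieModule K g (V i)]
  [∀ i, AddCommGroup (W i)] [∀ i, Module K (W i)]
  [∀ i, LieRingModule g (W i)] [∀ i, LieModule K g (W i)]

/-- Componentwise description of a weak morphism of dg `g`-modules `V ⇝ W`,
i.e. of a degree-0 `Ω_g`-linear map `Ω_g(V) → Ω_g(W)` intertwining the total
differentials. -/
def IsWeakMor
    (dV : ∀ i j : ℤ, j = i + 1 → (V i →ₗ[K] V j))
    (dW : ∀ i j : ℤ, j = i + 1 → (W i →ₗ[K] W j))
    (DW : ∀ (s : ℤ) (p : ℕ), CEc K g p (W s) →ₗ[K] CEc K g (p+1) (W s))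
    (F : ∀ (l : ℕ) (s k : ℤ), s + l = k → (V k →ₗ[K] CEc K g l (W s))) : Prop :=
  (∀ (k k' : ℤ) (hk : k' = k + 1) (h1 : k' + ((0:ℕ):ℤ) = k') (h2 : k + ((0:ℕ):ℤ) = k)
      (v : V k),
    F 0 k' k' h1 (dV k k' hk v)
      = (dW k k' hk).compAlternatingMap (F 0 k k h2 v)) ∧
  (∀ (m : ℕ) (s k k' : ℤ) (hk : k' = k + 1)
      (h1 : s + ((m+1 : ℕ):ℤ) = k') (h2 : s + ((m : ℕ):ℤ) = k)
      (h3 : (s-1) + ((m+1 : ℕ):ℤ) = k) (hs : s = (s-1) + 1)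
      (v : V k) (xs : Fin (m+1) → g),
    F (m+1) s k' h1 (dV k k' hk v) xs
      + ∑ i : Fin (m+1), ((-1 : ℤ)^(i : ℕ)) •
          (F m s k h2 ⁅xs i, v⁆) (xs ∘ i.succAbove)
    = DW s m (F m s k h2 v) xs
      + ((-1 : ℤ)^(m+1)) • dW (s-1) s hs ((F (m+1) (s-1) k h3 v) xs))

end Prelude

section Helpers

private lemma lp_funeq {g : Type} (m : ℕ) (xs : Fin (m+1) → g) (i : Fin (m+1)) (j : Fin m)
    (hij : (i:ℕ) ≤ (j:ℕ)) (b : g) :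
    Function.update (xs ∘ i.succAbove) j b
      = (fun t : Fin m =>
          if (t : ℕ) = 0 then b
          else xs ⟨if (t:ℕ) - 1 < (i:ℕ) then (t:ℕ) - 1
                   else if (t:ℕ) < (j:ℕ) + 1 then (t:ℕ)
                   else (t:ℕ) + 1,
                   by have := t.isLt; split_ifs <;> omega⟩)
        ∘ ⇑(j.cycleRange) := by
  cases m with
  | zero => exact absurd j.isLt (by omega)
  | succ n =>
    funext t
    simp only [Function.comp_apply, Function.update_apply]
    rcases Nat.lt_trichotomy (t:ℕ) (j:ℕ) with h | h | h
    · have htj : ¬ t = j := by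
        intro e; rw [e] at h; omega
      have hc : j.cycleRange t = ⟨(t:ℕ)+1, by omega⟩ := by
        apply Fin.ext
        rw [Fin.coe_cycleRange_of_lt (Fin.lt_def.mpr h)]
      rw [if_neg htj, hc]
      simp only []
      rw [if_neg (by simp)]
      by_cases hti : (t:ℕ) < (i:ℕ)
      · rw [Fin.succAbove_of_castSucc_lt _ _ (by rw [Fin.lt_def, Fin.coe_castSucc]; exact hti)]
        congr 1
        apply Fin.ext
        simp only [Fin.coe_castSucc]
        split_ifs <;> omega
      · rw [Fin.succAbove_of_le_castSucc _ _ (by rw [Fin.le_def, Fin.coe_castSucc]; omega)]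
        congr 1
        apply Fin.ext
        simp only [Fin.val_succ]
        split_ifs <;> omega
    · have htj : t = j := Fin.ext h
      have hc : j.cycleRange t = 0 := Fin.cycleRange_of_eq htj
      rw [if_pos htj, hc]
      simp
    · have htj : ¬ t = j := by
        intro e; rw [e] at h; omega
      have hc : j.cycleRange t = t := Fin.cycleRange_of_gt (Fin.lt_def.mpr h)
      rw [if_neg htj, hc]
      rw [if_neg (by omega)]
      rw [Fin.succAbove_of_le_castSucc _ _ (by rw [Fin.le_def, Fin.coe_castSucc]; omega)]
      congr 1
      apply Fin.ext
      simp only [Fin.val_succ]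
      split_ifs <;> omega

private lemma lp_comb {K g N : Type} [Field K] [LieRing g] [LieAlgebra K g]
    [AddCommGroup N] [Module K N] (m : ℕ)
    (ω : g [⋀^Fin m]→ₗ[K] N) (xs : Fin (m+1) → g) :
    (∑ i : Fin (m+1), ∑ j : Fin (m+1),
        if hij : (i : ℕ) < (j : ℕ) then
          ((-1 : ℤ)^((i:ℕ)+(j:ℕ))) • ω (fun t : Fin m =>
            if (t : ℕ) = 0 then ⁅xs i, xs j⁆
            else xs (⟨if (t:ℕ) - 1 < (i:ℕ) then (t:ℕ) - 1
                     else if (t:ℕ) < (j:ℕ) then (t:ℕ)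
                     else (t:ℕ) + 1,
                     by have := t.isLt; split_ifs <;> omega⟩ : Fin m.succ))
        else 0)
    = - ∑ i : Fin (m+1), ((-1 : ℤ)^(i : ℕ)) •
        ∑ j : Fin m, if (i : ℕ) ≤ (j : ℕ) then
          ω (Function.update (xs ∘ i.succAbove) j ⁅xs i, xs (i.succAbove j)⁆)
        else 0 := by
  rw [← Finset.sum_neg_distrib]
  refine Finset.sum_congr rfl fun i _ => ?_
  rw [Fin.sum_univ_succ, dif_neg (by simp), zero_add, Finset.smul_sum,
    ← Finset.sum_neg_distrib]
  refine Finset.sum_congr rfl fun j _ => ?_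
  by_cases hij : (i:ℕ) ≤ (j:ℕ)
  · rw [dif_pos (by simp only [Fin.val_succ]; omega), if_pos hij]
    have hsA : i.succAbove j = j.succ :=
      Fin.succAbove_of_le_castSucc _ _ (by rw [Fin.le_def, Fin.coe_castSucc]; exact hij)
    rw [hsA]
    simp only [Fin.val_succ]
    rw [lp_funeq m xs i j hij ⁅xs i, xs j.succ⁆, AlternatingMap.map_perm,
      Fin.sign_cycleRange, Units.smul_def]
    simp only [Units.val_pow_eq_pow_val, Units.val_neg, Units.val_one]
    rw [smul_smul, ← neg_smul]
    congr 1
    ring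
  · rw [dif_neg (by simp only [Fin.val_succ]; omega), if_neg hij, smul_zero, neg_zero]

end Helpers


/-- Let `V` be a non-negative bounded dg `g`-module and
`A = {α_k : V^k → ∧^k g^∨ ⊗ g}` a family of linear maps.  The corresponding
degree-0 `Ω_g`-linear map `α : Ω_g(V) → Ω_g(g)` (encoded by any weak-morphism
datum `F : V ⇝ Wg` compatible with `A`, where `Wg ≅ g` is concentrated in
degree 0 with the adjoint action) defines a dg Loday–Pirashvili module if and
only if the explicit equations (the paper's equation `(equation of f)`) hold:
for all `k`, `v ∈ V^k`, `x_0, …, x_k ∈ g`,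

`α_{k+1}(d^V v | x_0,…,x_k) = Σ_i (-1)^i ([x_i, α_k(v|…x̂_i…)] - α_k(x_i ▷ v|…x̂_i…))
   + Σ_{i<j} (-1)^{i+j} α_k(v | [x_i,x_j], x_0,…,x̂_i,…,x̂_j,…,x_k)`. -/
theorem statement3
    (K g : Type) [Field K] [CharZero K] [LieRing g] [LieAlgebra K g]
    [Module.Finite K g]
    (V : ℤ → Type) [∀ i, AddCommGroup (V i)] [∀ i, Module K (V i)]
    [∀ i, LieRingModule g (V i)] [∀ i, LieModule K g (V i)]
    (dV : ∀ i j : ℤ, j = i + 1 → (V i →ₗ[K] V j))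
    (hdVsq : ∀ (i j k : ℤ) (hij : j = i + 1) (hjk : k = j + 1) (v : V i),
      dV j k hjk (dV i j hij v) = 0)
    (hdVeq : ∀ (i j : ℤ) (h : j = i + 1) (x : g) (v : V i),
      dV i j h ⁅x, v⁆ = ⁅x, dV i j h v⁆)
    (hVnn : ∀ i : ℤ, i < 0 → Subsingleton (V i))
    (hVbdd : ∃ N : ℤ, ∀ i : ℤ, N < i → Subsingleton (V i))
    -- the target: a dg `g`-module `Wg` concentrated in degree 0, identified
    -- with the adjoint module `g`
    (Wg : ℤ → Type) [∀ i, AddCommGroup (Wg i)] [∀ i, Module K (Wg i)]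
    [∀ i, LieRingModule g (Wg i)] [∀ i, LieModule K g (Wg i)]
    (hWg0 : ∀ i : ℤ, i ≠ 0 → Subsingleton (Wg i))
    (dWg : ∀ i j : ℤ, j = i + 1 → (Wg i →ₗ[K] Wg j))
    (hdWg : ∀ (i j : ℤ) (h : j = i + 1) (w : Wg i), dWg i j h w = 0)
    (e0 : Wg 0 ≃ₗ[K] g)
    (he0 : ∀ (x : g) (w : Wg 0), e0 ⁅x, w⁆ = ⁅x, e0 w⁆)
    (DWg : ∀ (s : ℤ) (p : ℕ), CEc K g p (Wg s) →ₗ[K] CEc K g (p+1) (Wg s))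
    (hDWg : ∀ s : ℤ, IsCEDiff K g (DWg s))
    -- the family `α_k` and a componentwise representation `F` of the
    -- corresponding `Ω_g`-linear map `α : Ω_g(V) → Ω_g(g)`
    (A : ∀ l : ℕ, V (l:ℤ) →ₗ[K] CEc K g l g)
    (F : ∀ (l : ℕ) (s k : ℤ), s + l = k → (V k →ₗ[K] CEc K g l (Wg s)))
    (hcompat : ∀ (l : ℕ) (h : (0:ℤ) + ((l:ℕ):ℤ) = (l:ℤ)) (v : V (l:ℤ))
      (xs : Fin l → g), e0 (F l 0 (l:ℤ) h v xs) = A l v xs) :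
    -- `(V, α)` is a dg Loday–Pirashvili module
    IsWeakMor V Wg dV dWg DWg F
      ↔
    -- the explicit equations on the family `{α_k}`
    (∀ (k : ℕ) (hk : ((k+1 : ℕ):ℤ) = (k:ℕ) + 1) (v : V (k:ℤ))
        (xs : Fin (k+1) → g),
      A (k+1) (dV (k:ℤ) ((k+1 : ℕ):ℤ) hk v) xs
        = (∑ i : Fin (k+1), ((-1 : ℤ)^(i : ℕ)) •
            (⁅xs i, A k v (xs ∘ i.succAbove)⁆
              - A k ⁅xs i, v⁆ (xs ∘ i.succAbove)))
          + ∑ i : Fin (k+1), ∑ j : Fin (k+1),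
              if hij : (i : ℕ) < (j : ℕ) then
                ((-1 : ℤ)^((i:ℕ)+(j:ℕ))) • A k v (fun t : Fin k =>
                  if (t : ℕ) = 0 then ⁅xs i, xs j⁆
                  else xs ⟨if (t:ℕ) - 1 < (i:ℕ) then (t:ℕ) - 1
                           else if (t:ℕ) < (j:ℕ) then (t:ℕ)
                           else (t:ℕ) + 1,
                           by have := t.isLt; split_ifs <;> omega⟩)
              else 0) := by
  constructor
  · intro hW k hk v xs
    have E0 := hW.2 k 0 (k:ℤ) ((k+1:ℕ):ℤ) hk (by omega) (by omega) (by omega) (by omega) v xs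
    rw [hdWg, smul_zero, add_zero, hDWg 0 k] at E0
    have E1 := congrArg e0 E0
    simp only [map_add, map_sum, map_zsmul, map_sub, he0, apply_ite (⇑e0), map_zero,
      hcompat] at E1
    rw [lp_comb k (A k v) xs]
    simp only [smul_sub, Finset.sum_sub_distrib] at E1 ⊢
    rw [eq_sub_of_add_eq E1]
    abel
  · intro h
    constructor
    · intro k k' hk h1 h2 v
      ext xs
      by_cases hk0 : k' = 0
      · subst hk0
        haveI := hVnn k (by omega)
        have hv : v = 0 := Subsingleton.elim v 0
        rw [hv]
        simp [hdWg]
      · haveI := hWg0 k' hk0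
        exact Subsingleton.elim _ _
    · intro m s k k' hk h1 h2 h3 hs v xs
      by_cases hs0 : s = 0
      · subst hs0
        obtain rfl : k = (m:ℤ) := by omega
        obtain rfl : k' = ((m+1:ℕ):ℤ) := by omega
        rw [hdWg, smul_zero, add_zero, hDWg 0 m]
        apply e0.injective
        simp only [map_add, map_sum, map_zsmul, map_sub, he0, apply_ite (⇑e0), map_zero,
          hcompat]
        have Q := h m hk v xs
        rw [lp_comb m (A m v) xs] at Q
        simp only [smul_sub, Finset.sum_sub_distrib] at Q ⊢
        rw [Q]
        abel
      · haveI := hWg0 s hs0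
        exact Subsingleton.elim _ _
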